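/- Lower bound on the cross term in the energy decomposition of the upwind advection term (Lemma B.7, bound part): for all φ, φ' : (ZMod N_x) × (ZMod N_y) → ℝ^{N_q} and all positive reals ε, c, Δt, the quantity B := − Σ_{(i,j)} Σ_ℓ w_ℓ ( Ω⁺_ℓ (D⁺_x φ')(i,j)_ℓ + Ω⁻_ℓ (D⁻_x φ')(i,j)_ℓ ) · (φ(i,j)_ℓ − φ'(i,j)_ℓ) · ΔxΔy satisfies B ≥ −(ε/(4cΔt)) Σ_{(i,j)} Σ_ℓ w_ℓ (φ(i,j)_ℓ − φ'(i,j)_ℓ)² · ΔxΔy − (cΔt/ε) Σ_{(i,j)} Σ_ℓ w_ℓ Ω_ℓ² ((D⁺_x φ')(i,j)_ℓ)² · ΔxΔy. -/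

import Mathlib

open Finset

/-- Lower bound on the cross term in the energy decomposition of the upwind advection
term (Lemma B.7, bound part). -/
theorem upwind_cross_term_lower_bound
    (Nx Ny Nq : ℕ) [NeZero Nx] [NeZero Ny]
    (Δx Δy : ℝ) (hΔx : 0 < Δx) (hΔy : 0 < Δy)
    (w Ω : Fin Nq → ℝ) (hw : ∀ ℓ, 0 ≤ w ℓ)
    (φ φ' : ZMod Nx × ZMod Ny → Fin Nq → ℝ)
    (ε c Δt : ℝ) (hε : 0 < ε) (hc : 0 < c) (hΔt : 0 < Δt) :
    -∑ p : ZMod Nx × ZMod Ny, ∑ ℓ : Fin Nq,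
        w ℓ * ((Ω ℓ + |Ω ℓ|) / 2 * ((φ' (p.1 + 1, p.2) ℓ - φ' p ℓ) / Δx)
               + (Ω ℓ - |Ω ℓ|) / 2 * ((φ' p ℓ - φ' (p.1 - 1, p.2) ℓ) / Δx))
          * (φ p ℓ - φ' p ℓ) * (Δx * Δy)
    ≥ -(ε / (4 * c * Δt)) * ∑ p : ZMod Nx × ZMod Ny, ∑ ℓ : Fin Nq,
          w ℓ * (φ p ℓ - φ' p ℓ) ^ 2 * (Δx * Δy)
      - (c * Δt / ε) * ∑ p : ZMod Nx × ZMod Ny, ∑ ℓ : Fin Nq,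
          w ℓ * (Ω ℓ) ^ 2 * (((φ' (p.1 + 1, p.2) ℓ - φ' p ℓ) / Δx)) ^ 2 * (Δx * Δy) := by
  set A := Δx * Δy with hAdef
  have hA0 : (0:ℝ) < A := mul_pos hΔx hΔy
  set K := ε / (4 * c * Δt) with hKdef
  set M := c * Δt / ε with hMdef
  have hK : 0 < K := by rw [hKdef]; positivity
  have hM : 0 < M := by rw [hMdef]; positivity
  have hKM : K * M = 1/4 := by
    rw [hKdef, hMdef]
    field_simp
  -- forward difference
  set d : ZMod Nx × ZMod Ny → Fin Nq → ℝ :=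
    fun p ℓ => (φ' (p.1 + 1, p.2) ℓ - φ' p ℓ) / Δx with hd
  have hdm : ∀ (p : ZMod Nx × ZMod Ny) (ℓ : Fin Nq),
      (φ' p ℓ - φ' (p.1 - 1, p.2) ℓ) / Δx = d (p.1 - 1, p.2) ℓ := by
    intro p ℓ
    simp [hd]
  set Ωp : Fin Nq → ℝ := fun ℓ => (Ω ℓ + |Ω ℓ|) / 2 with hΩp
  set Ωm : Fin Nq → ℝ := fun ℓ => (Ω ℓ - |Ω ℓ|) / 2 with hΩm
  have hzero : ∀ ℓ, Ωp ℓ * Ωm ℓ = 0 := by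
    intro ℓ
    have := sq_abs (Ω ℓ)
    simp only [hΩp, hΩm]
    nlinarith [sq_abs (Ω ℓ)]
  have hsumΩ : ∀ ℓ, Ωp ℓ ^ 2 + Ωm ℓ ^ 2 = Ω ℓ ^ 2 := by
    intro ℓ
    simp only [hΩp, hΩm]
    nlinarith [sq_abs (Ω ℓ)]
  -- Young's inequality with weights
  have young : ∀ a u : ℝ, a * u ≤ K * u ^ 2 + M * a ^ 2 := by
    intro a u
    have h0 : 0 ≤ K * (u - 2 * M * a) ^ 2 := by positivity
    have expand : K * (u - 2 * M * a) ^ 2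
        = K * u ^ 2 - 4 * (K * M) * (a * u) + 4 * (K * M) * (M * a ^ 2) := by ring
    rw [expand, hKM] at h0
    linarith
  -- reindexing along the x-direction
  have reindex : ∀ g : ZMod Nx × ZMod Ny → ℝ,
      ∑ p : ZMod Nx × ZMod Ny, g (p.1 - 1, p.2) = ∑ p : ZMod Nx × ZMod Ny, g p := by
    intro g
    exact Fintype.sum_equiv ((Equiv.subRight (1 : ZMod Nx)).prodCongr (Equiv.refl (ZMod Ny)))
      (fun p => g (p.1 - 1, p.2)) g (fun p => by cases p; rfl)
  -- main step
  have main : ∑ p : ZMod Nx × ZMod Ny, ∑ ℓ : Fin Nq,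
        w ℓ * (Ωp ℓ * d p ℓ + Ωm ℓ * ((φ' p ℓ - φ' (p.1 - 1, p.2) ℓ) / Δx))
          * (φ p ℓ - φ' p ℓ) * A
      ≤ K * (∑ p : ZMod Nx × ZMod Ny, ∑ ℓ : Fin Nq,
            w ℓ * (φ p ℓ - φ' p ℓ) ^ 2 * A)
        + M * (∑ p : ZMod Nx × ZMod Ny, ∑ ℓ : Fin Nq,
            w ℓ * Ω ℓ ^ 2 * (d p ℓ) ^ 2 * A) := by
    have step1 : ∑ p : ZMod Nx × ZMod Ny, ∑ ℓ : Fin Nq,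
          w ℓ * (Ωp ℓ * d p ℓ + Ωm ℓ * ((φ' p ℓ - φ' (p.1 - 1, p.2) ℓ) / Δx))
            * (φ p ℓ - φ' p ℓ) * A
        ≤ ∑ p : ZMod Nx × ZMod Ny, ∑ ℓ : Fin Nq,
            (K * (w ℓ * (φ p ℓ - φ' p ℓ) ^ 2 * A)
             + M * (w ℓ * (Ωp ℓ ^ 2 * (d p ℓ) ^ 2 + Ωm ℓ ^ 2 * (d (p.1 - 1, p.2) ℓ) ^ 2) * A)) := by
      refine Finset.sum_le_sum fun p _ => Finset.sum_le_sum fun ℓ _ => ?_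
      rw [hdm p ℓ]
      set a := Ωp ℓ * d p ℓ + Ωm ℓ * d (p.1 - 1, p.2) ℓ with ha
      have ha2 : a ^ 2 = Ωp ℓ ^ 2 * (d p ℓ) ^ 2 + Ωm ℓ ^ 2 * (d (p.1 - 1, p.2) ℓ) ^ 2 := by
        rw [ha]
        linear_combination (2 * d p ℓ * d (p.1 - 1, p.2) ℓ) * hzero ℓ
      have hy := young a (φ p ℓ - φ' p ℓ)
      have hwA : 0 ≤ w ℓ * A := mul_nonneg (hw ℓ) hA0.le
      calc w ℓ * a * (φ p ℓ - φ' p ℓ) * A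
          = (a * (φ p ℓ - φ' p ℓ)) * (w ℓ * A) := by ring
        _ ≤ (K * (φ p ℓ - φ' p ℓ) ^ 2 + M * a ^ 2) * (w ℓ * A) :=
            mul_le_mul_of_nonneg_right hy hwA
        _ = K * (w ℓ * (φ p ℓ - φ' p ℓ) ^ 2 * A)
            + M * (w ℓ * (Ωp ℓ ^ 2 * (d p ℓ) ^ 2 + Ωm ℓ ^ 2 * (d (p.1 - 1, p.2) ℓ) ^ 2) * A) := by
            rw [ha2]; ring
    refine step1.trans_eq ?_
    simp only [Finset.sum_add_distrib, ← Finset.mul_sum]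
    congr 1
    congr 1
    -- the M-part: split and reindex
    have split : ∀ p : ZMod Nx × ZMod Ny, ∑ ℓ : Fin Nq,
        w ℓ * (Ωp ℓ ^ 2 * (d p ℓ) ^ 2 + Ωm ℓ ^ 2 * (d (p.1 - 1, p.2) ℓ) ^ 2) * A
        = (∑ ℓ : Fin Nq, w ℓ * Ωp ℓ ^ 2 * (d p ℓ) ^ 2 * A)
          + ∑ ℓ : Fin Nq, w ℓ * Ωm ℓ ^ 2 * (d (p.1 - 1, p.2) ℓ) ^ 2 * A := by
      intro p
      rw [← Finset.sum_add_distrib]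
      exact Finset.sum_congr rfl fun ℓ _ => by ring
    calc ∑ p : ZMod Nx × ZMod Ny, ∑ ℓ : Fin Nq,
          w ℓ * (Ωp ℓ ^ 2 * (d p ℓ) ^ 2 + Ωm ℓ ^ 2 * (d (p.1 - 1, p.2) ℓ) ^ 2) * A
        = (∑ p : ZMod Nx × ZMod Ny, ∑ ℓ : Fin Nq, w ℓ * Ωp ℓ ^ 2 * (d p ℓ) ^ 2 * A)
          + ∑ p : ZMod Nx × ZMod Ny, ∑ ℓ : Fin Nq, w ℓ * Ωm ℓ ^ 2 * (d (p.1 - 1, p.2) ℓ) ^ 2 * A := by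
          rw [← Finset.sum_add_distrib]
          exact Finset.sum_congr rfl fun p _ => split p
      _ = (∑ p : ZMod Nx × ZMod Ny, ∑ ℓ : Fin Nq, w ℓ * Ωp ℓ ^ 2 * (d p ℓ) ^ 2 * A)
          + ∑ p : ZMod Nx × ZMod Ny, ∑ ℓ : Fin Nq, w ℓ * Ωm ℓ ^ 2 * (d p ℓ) ^ 2 * A := by
          rw [reindex (fun q => ∑ ℓ : Fin Nq, w ℓ * Ωm ℓ ^ 2 * (d q ℓ) ^ 2 * A)]
      _ = ∑ p : ZMod Nx × ZMod Ny, ∑ ℓ : Fin Nq, w ℓ * Ω ℓ ^ 2 * (d p ℓ) ^ 2 * A := by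
          rw [← Finset.sum_add_distrib]
          refine Finset.sum_congr rfl fun p _ => ?_
          rw [← Finset.sum_add_distrib]
          refine Finset.sum_congr rfl fun ℓ _ => ?_
          rw [← hsumΩ ℓ]; ring
  linarith [main]
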